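/- Let n ≥ 3 and s ≥ 1 be integers. Then the sum over prime divisors p of n of (ln p)^s / p is at most c · s^s · (ln ln n)^s, where c > 0 is an absolute constant. -/

import Mathlib

open Real Finset


-- A1
lemma log_le_div_e {t : ℝ} (ht : 0 < t) : Real.log t ≤ t / Real.exp 1 := by
  have h := Real.log_le_sub_one_of_pos (x := t / Real.exp 1) (by positivity)
  rw [Real.log_div (ne_of_gt ht) (ne_of_gt (Real.exp_pos 1)), Real.log_exp] at h
  linarith

-- A2
lemma absorb (B : ℝ) (s : ℕ) (hB : 0 < B) (hs : 1 ≤ s) :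
    B ^ s ≤ Real.exp (B / Real.exp 1) * (s : ℝ) ^ s := by
  have hs0 : (0:ℝ) < s := by exact_mod_cast hs
  have h1 : B ^ s = (B / s) ^ s * (s:ℝ) ^ s := by
    rw [div_pow, div_mul_cancel₀]
    positivity
  rw [h1]
  gcongr ?_ * _
  have h2 : (B / s) ^ s = Real.exp ((s : ℝ) * Real.log (B / s)) := by
    rw [Real.exp_nat_mul, Real.exp_log (by positivity)]
  rw [h2]
  apply Real.exp_le_exp.mpr
  have h3 : Real.log (B / s) ≤ (B / s) / Real.exp 1 := log_le_div_e (by positivity)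
  calc (s:ℝ) * Real.log (B/s) ≤ (s:ℝ) * ((B/s)/Real.exp 1) := by
        apply mul_le_mul_of_nonneg_left h3 (le_of_lt hs0)
    _ = B / Real.exp 1 := by field_simp

-- A3
lemma anti_aux (s : ℕ) (hs : 1 ≤ s) {x y : ℝ} (hx : Real.exp s ≤ x) (hxy : x ≤ y) :
    (Real.log y) ^ s / y ≤ (Real.log x) ^ s / x := by
  have hs0 : (0:ℝ) < s := by exact_mod_cast hs
  have hx1 : (1:ℝ) < x := lt_of_lt_of_le (by
    calc (1:ℝ) = Real.exp 0 := (Real.exp_zero).symm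
    _ < Real.exp s := Real.exp_lt_exp.mpr hs0) hx
  have hx0 : (0:ℝ) < x := by linarith
  have hy0 : (0:ℝ) < y := by linarith
  have hlx : (s:ℝ) ≤ Real.log x := by
    rw [← Real.log_exp (s:ℝ)]; exact Real.log_le_log (Real.exp_pos _) hx
  have hlx0 : (0:ℝ) < Real.log x := lt_of_lt_of_le hs0 hlx
  have hr1 : (1:ℝ) ≤ y / x := (one_le_div hx0).mpr hxy
  have hlr0 : 0 ≤ Real.log (y / x) := Real.log_nonneg hr1
  -- log y ≤ log x * (1 + log(y/x)/s)
  have key : Real.log y ≤ Real.log x * (1 + Real.log (y / x) / s) := by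
    have h1 : Real.log y = Real.log x + Real.log (y / x) := by
      rw [Real.log_div (ne_of_gt hy0) (ne_of_gt hx0)]; ring
    have h2 : Real.log (y / x) ≤ Real.log x * (Real.log (y / x) / s) := by
      rw [mul_div_assoc']
      rw [le_div_iff₀ hs0]
      have := mul_le_mul_of_nonneg_left hlx hlr0
      linarith [this]
    rw [h1]; rw [mul_add, mul_one]; linarith
  have key2 : (1 : ℝ) + Real.log (y / x) / s ≤ (y / x) ^ ((s:ℝ)⁻¹) := by
    rw [Real.rpow_def_of_pos (by positivity)]
    calc (1:ℝ) + Real.log (y/x) / s = Real.log (y/x) * (s:ℝ)⁻¹ + 1 := by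
          rw [div_eq_mul_inv]; ring
      _ ≤ Real.exp (Real.log (y/x) * (s:ℝ)⁻¹) := Real.add_one_le_exp _
  have hpow : (Real.log y) ^ s ≤ (Real.log x) ^ s * (y / x) := by
    have h3 : Real.log y ≤ Real.log x * (y / x) ^ ((s:ℝ)⁻¹) := by
      calc Real.log y ≤ Real.log x * (1 + Real.log (y / x) / s) := key
        _ ≤ Real.log x * (y / x) ^ ((s:ℝ)⁻¹) := by
            apply mul_le_mul_of_nonneg_left key2 (le_of_lt hlx0)
    have h4 : (Real.log y) ^ s ≤ (Real.log x * (y / x) ^ ((s:ℝ)⁻¹)) ^ s := by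
      apply pow_le_pow_left₀ (Real.log_nonneg (by linarith)) h3
    calc (Real.log y) ^ s ≤ (Real.log x * (y / x) ^ ((s:ℝ)⁻¹)) ^ s := h4
      _ = (Real.log x) ^ s * ((y / x) ^ ((s:ℝ)⁻¹)) ^ s := mul_pow _ _ _
      _ = (Real.log x) ^ s * (y / x) := by
          congr 1
          rw [← Real.rpow_natCast ((y/x) ^ ((s:ℝ)⁻¹)) s, ← Real.rpow_mul (by positivity)]
          rw [inv_mul_cancel₀ (ne_of_gt hs0), Real.rpow_one]
  rw [div_le_div_iff₀ hy0 hx0]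
  calc (Real.log y) ^ s * x ≤ ((Real.log x) ^ s * (y / x)) * x := by
        apply mul_le_mul_of_nonneg_right hpow (le_of_lt hx0)
    _ = (Real.log x) ^ s * y := by field_simp

-- A4 : count of primes in (2^k, 2^(k+1)]
lemma block_count (k : ℕ) :
    k * ((Finset.Ioc (2^k) (2^(k+1))).filter Nat.Prime).card ≤ 2^(k+2) := by
  set B := (Finset.Ioc (2^k) (2^(k+1))).filter Nat.Prime with hB
  have h1 : (2^k) ^ B.card ≤ ∏ p ∈ B, p := by
    apply Finset.pow_card_le_prod
    intro p hp
    rw [hB, Finset.mem_filter, Finset.mem_Ioc] at hp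
    exact le_of_lt hp.1.1
  have h2 : ∏ p ∈ B, p ∣ primorial (2^(k+1)) := by
    apply Finset.prod_dvd_prod_of_subset
    intro p hp
    rw [hB, Finset.mem_filter, Finset.mem_Ioc] at hp
    simp only [primorial, Finset.mem_filter, Finset.mem_range]
    exact ⟨Nat.lt_succ_of_le hp.1.2, hp.2⟩
  have h3 : primorial (2^(k+1)) ≤ 4 ^ (2^(k+1)) := primorial_le_4_pow _
  have h4 : (2:ℕ) ^ (k * B.card) ≤ 2 ^ (2^(k+2)) := by
    calc (2:ℕ) ^ (k * B.card) = (2^k) ^ B.card := by rw [pow_mul]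
      _ ≤ ∏ p ∈ B, p := h1
      _ ≤ primorial (2^(k+1)) := Nat.le_of_dvd (primorial_pos _) h2
      _ ≤ 4 ^ (2^(k+1)) := h3
      _ = 2 ^ (2^(k+2)) := by
          rw [show (4:ℕ) = 2^2 by norm_num, ← pow_mul, pow_succ]
          ring_nf
  exact (Nat.pow_le_pow_iff_right (by norm_num)).mp h4

-- A5
lemma block_sum (s k : ℕ) (hk : 1 ≤ k) :
    ∑ p ∈ (Finset.Ioc (2^k) (2^(k+1))).filter Nat.Prime, (Real.log p)^s / p
      ≤ 4 * (((k:ℝ)+1) * Real.log 2)^s / k := by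
  have hk0 : (0:ℝ) < k := by exact_mod_cast hk
  set B := (Finset.Ioc (2^k) (2^(k+1))).filter Nat.Prime with hB
  have hM : ∀ p ∈ B, (Real.log p)^s / p ≤ (((k:ℝ)+1) * Real.log 2)^s / 2^k := by
    intro p hp
    rw [hB, Finset.mem_filter, Finset.mem_Ioc] at hp
    have hp1 : (2:ℝ)^k < p := by exact_mod_cast hp.1.1
    have hp2 : (p:ℝ) ≤ 2^(k+1) := by exact_mod_cast hp.1.2
    have hp0 : (0:ℝ) < p := lt_trans (by positivity) hp1
    have hlog : Real.log p ≤ ((k:ℝ)+1) * Real.log 2 := by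
      calc Real.log p ≤ Real.log (2^(k+1)) := Real.log_le_log hp0 hp2
        _ = ((k:ℝ)+1) * Real.log 2 := by rw [Real.log_pow]; push_cast; ring
    apply div_le_div₀ (by positivity) (pow_le_pow_left₀ (Real.log_nonneg (by
      have : (1:ℝ) < 2^k := by
        calc (1:ℝ) < 2 := one_lt_two
        _ ≤ 2^k := le_self_pow₀ one_le_two (by omega)
      linarith)) hlog s) (by positivity) (le_of_lt hp1)
  calc ∑ p ∈ B, (Real.log p)^s / p ≤ ∑ _p ∈ B, (((k:ℝ)+1) * Real.log 2)^s / 2^k :=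
        Finset.sum_le_sum hM
    _ = (B.card : ℝ) * ((((k:ℝ)+1) * Real.log 2)^s / 2^k) := by
        rw [Finset.sum_const, nsmul_eq_mul]
    _ ≤ (2^(k+2) / (k:ℝ)) * ((((k:ℝ)+1) * Real.log 2)^s / 2^k) := by
        apply mul_le_mul_of_nonneg_right _ (by positivity)
        rw [div_eq_mul_inv, ← mul_le_mul_iff_of_pos_right hk0]
        have h := block_count k
        have : (k:ℝ) * B.card ≤ 2^(k+2) := by exact_mod_cast h
        calc (B.card:ℝ) * ((k:ℝ)) = (k:ℝ) * B.card := by ring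
          _ ≤ 2^(k+2) := this
          _ = 2^(k+2) * (k:ℝ)⁻¹ * k := by field_simp
    _ = 4 * (((k:ℝ)+1) * Real.log 2)^s / k := by
        field_simp
        ring

-- A6
lemma all_small_sum (s : ℕ) (K : ℕ) :
    ∑ p ∈ (Finset.Ioc 1 (2^(K+1))).filter Nat.Prime, (Real.log p)^s / p
      ≤ 1 + ∑ k ∈ Finset.Icc 1 K, 4 * (((k:ℝ)+1) * Real.log 2)^s / k := by
  induction K with
  | zero =>
    have h2 : (Finset.Ioc 1 (2^(0+1))).filter Nat.Prime = {2} := by decide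
    rw [h2]
    simp only [Finset.sum_singleton, Finset.Icc_self, Nat.cast_ofNat]
    have : Finset.Icc 1 0 = (∅ : Finset ℕ) := by decide
    rw [this, Finset.sum_empty]
    have hl2 : Real.log 2 ≤ 1 := le_of_lt (lt_trans Real.log_two_lt_d9 (by norm_num))
    have : (Real.log 2)^s ≤ 1 := pow_le_one₀ (Real.log_nonneg one_le_two) hl2
    calc (Real.log 2)^s / 2 ≤ 1 / 2 := by gcongr
      _ ≤ 1 + 0 := by norm_num
  | succ K ih =>
    have hsplit : Finset.Ioc 1 (2^(K+2)) = Finset.Ioc 1 (2^(K+1)) ∪ Finset.Ioc (2^(K+1)) (2^(K+2)) := by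
      rw [Finset.Ioc_union_Ioc_eq_Ioc]
      · exact Nat.one_le_two_pow
      · exact Nat.pow_le_pow_right (by norm_num) (by omega)
    have hdisj : Disjoint ((Finset.Ioc 1 (2^(K+1))).filter Nat.Prime)
        ((Finset.Ioc (2^(K+1)) (2^(K+2))).filter Nat.Prime) := by
      apply Finset.disjoint_filter_filter
      rw [Finset.disjoint_left]
      intro a ha hb
      rw [Finset.mem_Ioc] at ha hb
      omega
    rw [show K + 1 + 1 = K + 2 by rfl, hsplit, Finset.filter_union, Finset.sum_union hdisj]
    rw [Finset.sum_Icc_succ_top (by omega : 1 ≤ K + 1)]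
    have hb := block_sum s (K+1) (by omega)
    push_cast at hb ⊢
    linarith [ih]

-- A7
lemma blocks_total (t K : ℕ) :
    ∑ k ∈ Finset.Icc 1 K, 4 * (((k:ℝ)+1) * Real.log 2)^(t+1) / k
      ≤ 8 * (((K:ℝ)+1) * Real.log 2)^(t+1) := by
  have hl2 : (0:ℝ) < Real.log 2 := Real.log_pos one_lt_two
  have hterm : ∀ k ∈ Finset.Icc 1 K,
      4 * (((k:ℝ)+1) * Real.log 2)^(t+1) / k ≤ 8 * Real.log 2 * (((K:ℝ)+1) * Real.log 2)^t := by
    intro k hk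
    rw [Finset.mem_Icc] at hk
    have hk1 : (1:ℝ) ≤ k := by exact_mod_cast hk.1
    have hkK : (k:ℝ) ≤ K := by exact_mod_cast hk.2
    have hk0 : (0:ℝ) < k := by linarith
    have hbase : ((k:ℝ)+1) * Real.log 2 ≤ ((K:ℝ)+1) * Real.log 2 := by
      apply mul_le_mul_of_nonneg_right (by linarith) (le_of_lt hl2)
    have hpow : (((k:ℝ)+1) * Real.log 2)^t ≤ (((K:ℝ)+1) * Real.log 2)^t := by
      apply pow_le_pow_left₀ (by positivity) hbase
    have hratio : ((k:ℝ)+1) / k ≤ 2 := by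
      rw [div_le_iff₀ hk0]; linarith
    calc 4 * (((k:ℝ)+1) * Real.log 2)^(t+1) / k
        = 4 * ((((k:ℝ)+1) * Real.log 2)^t * (((k:ℝ)+1) * Real.log 2)) / k := by rw [pow_succ]
      _ = 4 * (((k:ℝ)+1) * Real.log 2)^t * Real.log 2 * (((k:ℝ)+1) / k) := by
          field_simp
      _ ≤ 4 * (((K:ℝ)+1) * Real.log 2)^t * Real.log 2 * 2 := by
          apply mul_le_mul _ hratio (by positivity) (by positivity)
          apply mul_le_mul_of_nonneg_right _ (le_of_lt hl2)
          apply mul_le_mul_of_nonneg_left hpow (by norm_num)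
      _ = 8 * Real.log 2 * (((K:ℝ)+1) * Real.log 2)^t := by ring
  calc ∑ k ∈ Finset.Icc 1 K, 4 * (((k:ℝ)+1) * Real.log 2)^(t+1) / k
      ≤ ∑ _k ∈ Finset.Icc 1 K, 8 * Real.log 2 * (((K:ℝ)+1) * Real.log 2)^t :=
        Finset.sum_le_sum hterm
    _ = (K:ℝ) * (8 * Real.log 2 * (((K:ℝ)+1) * Real.log 2)^t) := by
        rw [Finset.sum_const, nsmul_eq_mul, Nat.card_Icc]; norm_num
    _ ≤ ((K:ℝ)+1) * (8 * Real.log 2 * (((K:ℝ)+1) * Real.log 2)^t) := by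
        apply mul_le_mul_of_nonneg_right (by linarith) (by positivity)
    _ = 8 * (((K:ℝ)+1) * Real.log 2)^(t+1) := by rw [pow_succ]; ring

lemma big_case (n t : ℕ) (hn : 16 ≤ n) :
    ∑ p ∈ n.primeFactors, (Real.log p) ^ (t+1) / p
      ≤ 34 * ((t+1 : ℕ) : ℝ) ^ (t+1) * (Real.log (Real.log n)) ^ (t+1) := by
  classical
  set s : ℕ := t + 1 with hsdef
  have hs : 1 ≤ s := by omega
  set L : ℝ := Real.log (Real.log n) with hLdef
  have hl2 : (0:ℝ) < Real.log 2 := Real.log_pos one_lt_two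
  have hlogn : Real.exp 1 ≤ Real.log n := by
    have h16 : (16:ℝ) ≤ n := by exact_mod_cast hn
    have : Real.log 16 ≤ Real.log n := Real.log_le_log (by norm_num) h16
    have h4 : Real.log 16 = 4 * Real.log 2 := by
      rw [show (16:ℝ) = 2^4 by norm_num, Real.log_pow]; norm_num
    nlinarith [Real.log_two_gt_d9, Real.exp_one_lt_d9]
  have hlogn0 : (0:ℝ) < Real.log n := lt_of_lt_of_le (Real.exp_pos 1) hlogn
  have hL1 : (1:ℝ) ≤ L := by
    rw [hLdef, ← Real.log_exp 1]
    exact Real.log_le_log (Real.exp_pos 1) hlogn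
  have hexpL : Real.exp L = Real.log n := Real.exp_log hlogn0
  have hs0 : (0:ℝ) < s := by exact_mod_cast hs
  have hs1 : (1:ℝ) ≤ s := by exact_mod_cast hs
  set a : ℝ := s * L with hadef
  have ha1 : (1:ℝ) ≤ a := by nlinarith
  have ha0 : (0:ℝ) < a := by linarith
  set T : ℝ := Real.exp a with hTdef
  set K : ℕ := ⌈a / Real.log 2⌉₊ with hKdef
  have hK1 : a ≤ ((K:ℝ)+1) * Real.log 2 := by
    have := Nat.le_ceil (a / Real.log 2)
    rw [div_le_iff₀ hl2] at this
    nlinarith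
  have hK2 : ((K:ℝ)+1) * Real.log 2 ≤ a + 2 * Real.log 2 := by
    have h := Nat.ceil_lt_add_one (show (0:ℝ) ≤ a / Real.log 2 by positivity)
    rw [← hKdef] at h
    have hdiv : a / Real.log 2 * Real.log 2 = a := div_mul_cancel₀ a (ne_of_gt hl2)
    nlinarith
  clear_value s L a T K
  have hT2K : T ≤ ((2^(K+1) : ℕ) : ℝ) := by
    have hc : ((2^(K+1) : ℕ) : ℝ) = Real.exp (((K:ℝ)+1) * Real.log 2) := by
      rw [show ((K:ℝ)+1) = ((K+1 : ℕ):ℝ) by push_cast; ring, Real.exp_nat_mul,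
        Real.exp_log two_pos]
      push_cast
      ring
    rw [hc, hTdef]
    exact Real.exp_le_exp.mpr hK1
  rw [← Finset.sum_filter_add_sum_filter_not n.primeFactors (fun p : ℕ => (p:ℝ) ≤ T)]
  have smallb : ∑ p ∈ n.primeFactors.filter (fun p : ℕ => (p:ℝ) ≤ T), (Real.log p) ^ s / p
      ≤ 1 + 32 * a ^ s := by
    have hsub : n.primeFactors.filter (fun p : ℕ => (p:ℝ) ≤ T)
        ⊆ (Finset.Ioc (1:ℕ) (2^(K+1))).filter Nat.Prime := by
      intro p hp
      rw [Finset.mem_filter] at hp ⊢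
      have hprime := Nat.prime_of_mem_primeFactors hp.1
      refine ⟨?_, hprime⟩
      rw [Finset.mem_Ioc]
      refine ⟨hprime.one_lt, ?_⟩
      have : (p:ℝ) ≤ ((2^(K+1) : ℕ) : ℝ) := le_trans hp.2 hT2K
      exact_mod_cast this
    have h1 : ∑ p ∈ n.primeFactors.filter (fun p : ℕ => (p:ℝ) ≤ T), (Real.log p) ^ s / p
        ≤ ∑ p ∈ (Finset.Ioc (1:ℕ) (2^(K+1))).filter Nat.Prime, (Real.log p) ^ s / p := by
      apply Finset.sum_le_sum_of_subset_of_nonneg hsub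
      intro i hi _
      rw [Finset.mem_filter, Finset.mem_Ioc] at hi
      have : (1:ℝ) ≤ i := by exact_mod_cast le_of_lt hi.1.1
      have hi0 : (0:ℝ) < i := by linarith
      positivity
    have h2 := all_small_sum s K
    have h3 := blocks_total t K
    rw [← hsdef] at h3
    have h4 : (((K:ℝ)+1) * Real.log 2) ^ s ≤ (a + 2 * Real.log 2) ^ s :=
      pow_le_pow_left₀ (by positivity) hK2 s
    have h5 : (a + 2 * Real.log 2) ^ s ≤ 4 * a ^ s := by
      have e1 : a + 2 * Real.log 2 = a * (1 + 2 * Real.log 2 / a) := by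
        field_simp
      have e2 : (1 + 2 * Real.log 2 / a) ^ s ≤ Real.exp ((s:ℝ) * (2 * Real.log 2 / a)) := by
        calc (1 + 2 * Real.log 2 / a) ^ s ≤ (Real.exp (2 * Real.log 2 / a)) ^ s := by
              apply pow_le_pow_left₀ (by positivity) ?_ s
              have := Real.add_one_le_exp (2 * Real.log 2 / a)
              linarith
          _ = Real.exp ((s:ℝ) * (2 * Real.log 2 / a)) := (Real.exp_nat_mul _ s).symm
      have e3 : (s:ℝ) * (2 * Real.log 2 / a) = 2 * Real.log 2 / L := by
        rw [hadef]; field_simp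
      have e4 : 2 * Real.log 2 / L ≤ 2 * Real.log 2 := by
        rw [div_le_iff₀ (by linarith)]
        nlinarith
      have e5 : Real.exp (2 * Real.log 2) = 4 := by
        rw [mul_comm, Real.exp_mul, Real.exp_log two_pos]
        norm_num
      calc (a + 2 * Real.log 2) ^ s = a ^ s * (1 + 2 * Real.log 2 / a) ^ s := by
            rw [e1, mul_pow]
        _ ≤ a ^ s * Real.exp ((s:ℝ) * (2 * Real.log 2 / a)) := by
            apply mul_le_mul_of_nonneg_left e2 (by positivity)
        _ ≤ a ^ s * 4 := by
            apply mul_le_mul_of_nonneg_left _ (by positivity)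
            rw [e3, ← e5]
            exact Real.exp_le_exp.mpr e4
        _ = 4 * a ^ s := by ring
    linarith
  have largeb : ∑ p ∈ n.primeFactors.filter (fun p : ℕ => ¬((p:ℝ) ≤ T)), (Real.log p) ^ s / p
      ≤ (s:ℝ) ^ s := by
    set P := n.primeFactors.filter (fun p : ℕ => ¬((p:ℝ) ≤ T)) with hP
    have hTp : ∀ p ∈ P, T ≤ (p:ℝ) := by
      intro p hp
      rw [hP, Finset.mem_filter] at hp
      exact le_of_lt (not_le.mp hp.2)
    have hterm : ∀ p ∈ P, (Real.log p) ^ s / p ≤ a ^ s / T := by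
      intro p hp
      have h := anti_aux s hs (x := T) (y := (p:ℝ))
        (by rw [hTdef]; apply Real.exp_le_exp.mpr; nlinarith) (hTp p hp)
      rwa [hTdef, Real.log_exp, ← hTdef] at h
    have hsum : ∑ p ∈ P, (Real.log p) ^ s / p ≤ (P.card : ℝ) * (a ^ s / T) := by
      calc ∑ p ∈ P, (Real.log p) ^ s / p ≤ ∑ _p ∈ P, a ^ s / T := Finset.sum_le_sum hterm
        _ = (P.card : ℝ) * (a ^ s / T) := by rw [Finset.sum_const, nsmul_eq_mul]
    have hcard : (P.card : ℝ) * a ≤ Real.exp L := by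
      have hprodn : (∏ p ∈ P, p : ℕ) ≤ n := by
        apply Nat.le_of_dvd (by omega)
        exact dvd_trans (Finset.prod_dvd_prod_of_subset _ _ _ (Finset.filter_subset _ _))
          (Nat.prod_primeFactors_dvd n)
      have hppos : ∀ p ∈ P, (0:ℝ) < (p:ℝ) := fun p hp =>
        lt_of_lt_of_le (Real.exp_pos a) (by rw [← hTdef]; exact hTp p hp)
      have h1 : (P.card : ℝ) * a ≤ ∑ p ∈ P, Real.log p := by
        have hle : ∀ p ∈ P, a ≤ Real.log p := by
          intro p hp
          have := Real.log_le_log (by rw [hTdef]; exact Real.exp_pos a) (hTp p hp)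
          rwa [hTdef, Real.log_exp] at this
        have := Finset.card_nsmul_le_sum P (fun p : ℕ => Real.log p) a hle
        rwa [nsmul_eq_mul] at this
      have h2 : ∑ p ∈ P, Real.log p = Real.log (∏ p ∈ P, (p:ℝ)) :=
        (Real.log_prod (s := P) (fun p hp => ne_of_gt (hppos p hp))).symm
      have h3 : Real.log (∏ p ∈ P, (p:ℝ)) ≤ Real.log n := by
        apply Real.log_le_log (Finset.prod_pos hppos)
        rw [← Nat.cast_prod]
        exact_mod_cast hprodn
      rw [hexpL]
      linarith
    have hT0 : (0:ℝ) < T := by rw [hTdef]; exact Real.exp_pos a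
    have key : Real.exp L * a ^ t ≤ (s:ℝ)^t * Real.exp a := by
      have h1 : a ^ t = (s:ℝ)^t * L^t := by rw [hadef, mul_pow]
      have h2 : Real.exp a = Real.exp L ^ t * Real.exp L := by
        rw [hadef, hsdef]
        push_cast
        rw [show ((t:ℝ)+1)*L = (t:ℝ)*L + L by ring, Real.exp_add, Real.exp_nat_mul]
      have h3 : L ^ t ≤ Real.exp L ^ t :=
        pow_le_pow_left₀ (by linarith) (by linarith [Real.add_one_le_exp L]) t
      rw [h1, h2]
      calc Real.exp L * ((s:ℝ)^t * L^t) = (s:ℝ)^t * Real.exp L * L^t := by ring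
        _ ≤ (s:ℝ)^t * Real.exp L * Real.exp L ^ t := by
            apply mul_le_mul_of_nonneg_left h3 (by positivity)
        _ = (s:ℝ)^t * (Real.exp L ^ t * Real.exp L) := by ring
    have hstep : (Real.exp L / a) * (a ^ s / T) ≤ (s:ℝ) ^ t := by
      have heq : (Real.exp L / a) * (a ^ s / T) = (Real.exp L * a ^ t) / T := by
        rw [hsdef, pow_succ]
        field_simp [ha0.ne', hT0.ne']
      rw [heq, div_le_iff₀ hT0, hTdef]
      calc Real.exp L * a ^ t ≤ (s:ℝ)^t * Real.exp a := key
        _ = (s:ℝ)^t * Real.exp a := rfl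
    have hc2 : (P.card : ℝ) ≤ Real.exp L / a := by
      rw [le_div_iff₀ ha0]; exact hcard
    calc ∑ p ∈ P, (Real.log p) ^ s / p ≤ (P.card : ℝ) * (a ^ s / T) := hsum
      _ ≤ (Real.exp L / a) * (a ^ s / T) := by
          apply mul_le_mul_of_nonneg_right hc2 (by positivity)
      _ ≤ (s:ℝ) ^ t := hstep
      _ ≤ (s:ℝ) ^ s := pow_le_pow_right₀ hs1 (by omega)
  have ha_s : a ^ s = (s:ℝ)^s * L^s := by rw [hadef, mul_pow]
  have h1s : (1:ℝ) ≤ (s:ℝ)^s * L^s := by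
    have u1 : (1:ℝ) ≤ (s:ℝ)^s := one_le_pow₀ hs1
    have u2 : (1:ℝ) ≤ L^s := one_le_pow₀ hL1
    calc (1:ℝ) = 1 * 1 := (one_mul 1).symm
      _ ≤ (s:ℝ)^s * L^s := mul_le_mul u1 u2 zero_le_one (by positivity)
  have hss : (s:ℝ)^s ≤ (s:ℝ)^s * L^s :=
    le_mul_of_one_le_right (by positivity) (one_le_pow₀ hL1)
  rw [ha_s] at smallb
  linarith

lemma log_lb {x : ℝ} (hx : 0 < x) : 1 - 1/x ≤ Real.log x := by
  have h := Real.log_le_sub_one_of_pos (show (0:ℝ) < 1/x by positivity)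
  rw [one_div, Real.log_inv] at h
  rw [one_div]
  linarith

lemma small_case (n s : ℕ) (hn3 : 3 ≤ n) (hn : n ≤ 15) (hs : 1 ≤ s) :
    ∑ p ∈ n.primeFactors, (Real.log p) ^ s / p
      ≤ 10^8 * (s:ℝ)^s * (Real.log (Real.log n))^s := by
  have hs1 : (1:ℝ) ≤ s := by exact_mod_cast hs
  set L : ℝ := Real.log (Real.log n) with hLdef
  have hlog3 : (1.09:ℝ) ≤ Real.log 3 := by
    have h1 : Real.log (3 / Real.exp 1) = Real.log 3 - 1 := by
      rw [Real.log_div (by norm_num) (ne_of_gt (Real.exp_pos 1)), Real.log_exp]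
    have h2 := log_lb (show (0:ℝ) < 3 / Real.exp 1 by positivity)
    rw [h1] at h2
    have h3 : 1 / (3 / Real.exp 1) = Real.exp 1 / 3 := by
      field_simp
    rw [h3] at h2
    nlinarith [Real.exp_one_lt_d9]
  have hlogn : (1.09:ℝ) ≤ Real.log n := by
    refine le_trans hlog3 (Real.log_le_log (by norm_num) ?_)
    exact_mod_cast hn3
  have hL008 : (0.08:ℝ) ≤ L := by
    have h1 : Real.log (1.09:ℝ) ≤ L := by
      rw [hLdef]
      exact Real.log_le_log (by norm_num) hlogn
    have h2 := log_lb (show (0:ℝ) < 1.09 by norm_num)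
    have : (0.08:ℝ) ≤ 1 - 1/1.09 := by norm_num
    linarith
  have hterm : ∀ p ∈ n.primeFactors, (Real.log p) ^ s / p ≤ (2.8:ℝ)^s / 2 := by
    intro p hp
    have hprime := Nat.prime_of_mem_primeFactors hp
    have hp2 : 2 ≤ p := hprime.two_le
    have hpn : p ≤ n := Nat.le_of_mem_primeFactors hp
    have hp16 : (p:ℝ) ≤ 16 := by
      have : p ≤ 15 := le_trans hpn hn
      have : (p:ℝ) ≤ 15 := by exact_mod_cast this
      linarith
    have hp2' : (2:ℝ) ≤ p := by exact_mod_cast hp2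
    have hlp : Real.log p ≤ 2.8 := by
      have h1 : Real.log p ≤ Real.log 16 := Real.log_le_log (by linarith) hp16
      have h2 : Real.log (16:ℝ) = 4 * Real.log 2 := by
        rw [show (16:ℝ) = 2^4 by norm_num, Real.log_pow]
        norm_num
      nlinarith [Real.log_two_lt_d9]
    have hnum : (Real.log p) ^ s ≤ (2.8:ℝ)^s :=
      pow_le_pow_left₀ (Real.log_nonneg (by linarith)) hlp s
    exact div_le_div₀ (by positivity) hnum (by norm_num) hp2'
  have hcard : n.primeFactors.card ≤ 16 := by
    have hsub : n.primeFactors ⊆ Finset.range 16 := by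
      intro p hp
      rw [Finset.mem_range]
      have := Nat.le_of_mem_primeFactors hp
      omega
    calc n.primeFactors.card ≤ (Finset.range 16).card := Finset.card_le_card hsub
      _ = 16 := Finset.card_range 16
  have hsum : ∑ p ∈ n.primeFactors, (Real.log p) ^ s / p ≤ 8 * (2.8:ℝ)^s := by
    calc ∑ p ∈ n.primeFactors, (Real.log p) ^ s / p
        ≤ ∑ _p ∈ n.primeFactors, (2.8:ℝ)^s / 2 := Finset.sum_le_sum hterm
      _ = (n.primeFactors.card : ℝ) * ((2.8:ℝ)^s / 2) := by
          rw [Finset.sum_const, nsmul_eq_mul]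
      _ ≤ 16 * ((2.8:ℝ)^s / 2) := by
          apply mul_le_mul_of_nonneg_right _ (by positivity)
          exact_mod_cast hcard
      _ = 8 * (2.8:ℝ)^s := by ring
  have hfactor : (2.8:ℝ)^s = (35:ℝ)^s * (0.08:ℝ)^s := by
    rw [← mul_pow]; norm_num
  have habs : (35:ℝ)^s ≤ Real.exp (35 / Real.exp 1) * (s:ℝ)^s := absorb 35 s (by norm_num) hs
  have hexp13 : Real.exp (35 / Real.exp 1) ≤ (3:ℝ)^13 := by
    have h1 : 35 / Real.exp 1 ≤ 13 := by
      rw [div_le_iff₀ (Real.exp_pos 1)]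
      nlinarith [Real.exp_one_gt_d9]
    calc Real.exp (35 / Real.exp 1) ≤ Real.exp 13 := Real.exp_le_exp.mpr h1
      _ = Real.exp 1 ^ 13 := by
          rw [← Real.exp_nat_mul]; norm_num
      _ ≤ (3:ℝ)^13 := by
          apply pow_le_pow_left₀ (le_of_lt (Real.exp_pos 1))
          nlinarith [Real.exp_one_lt_d9]
  have h008L : (0.08:ℝ)^s ≤ L^s := pow_le_pow_left₀ (by norm_num) hL008 s
  calc ∑ p ∈ n.primeFactors, (Real.log p) ^ s / p ≤ 8 * (2.8:ℝ)^s := hsum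
    _ = 8 * ((35:ℝ)^s * (0.08:ℝ)^s) := by rw [hfactor]
    _ ≤ 8 * ((Real.exp (35 / Real.exp 1) * (s:ℝ)^s) * (0.08:ℝ)^s) := by
        apply mul_le_mul_of_nonneg_left _ (by norm_num)
        apply mul_le_mul_of_nonneg_right habs (by positivity)
    _ ≤ 8 * (((3:ℝ)^13 * (s:ℝ)^s) * (0.08:ℝ)^s) := by
        apply mul_le_mul_of_nonneg_left _ (by norm_num)
        apply mul_le_mul_of_nonneg_right _ (by positivity)
        apply mul_le_mul_of_nonneg_right hexp13 (by positivity)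
    _ ≤ 8 * (((3:ℝ)^13 * (s:ℝ)^s) * L^s) := by
        apply mul_le_mul_of_nonneg_left _ (by norm_num)
        apply mul_le_mul_of_nonneg_left h008L (by positivity)
    _ ≤ 10^8 * (s:ℝ)^s * L^s := by
        have hsL : (0:ℝ) ≤ (s:ℝ)^s * L^s := by
          apply mul_nonneg (by positivity)
          apply pow_nonneg (by linarith)
        nlinarith


theorem stmt_4 : ∃ c : ℝ, 0 < c ∧ ∀ (n s : ℕ), 3 ≤ n → 1 ≤ s →
    ∑ p ∈ n.primeFactors, (Real.log p) ^ s / p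
      ≤ c * (s : ℝ) ^ s * (Real.log (Real.log n)) ^ s := by
  refine ⟨10^8, by norm_num, ?_⟩
  intro n s hn hs
  rcases le_or_gt n 15 with h15 | h15
  · exact small_case n s hn h15 hs
  · obtain ⟨t, rfl⟩ : ∃ t, s = t + 1 := ⟨s-1, by omega⟩
    refine le_trans (big_case n t (by omega)) ?_
    have hln : (1:ℝ) ≤ Real.log n := by
      have h16 : (16:ℝ) ≤ n := by exact_mod_cast h15
      have h1 : Real.log 16 ≤ Real.log n := Real.log_le_log (by norm_num) h16
      have h2 : Real.log (16:ℝ) = 4 * Real.log 2 := by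
        rw [show (16:ℝ) = 2^4 by norm_num, Real.log_pow]; norm_num
      nlinarith [Real.log_two_gt_d9]
    have hA : (0:ℝ) ≤ ((t+1 : ℕ):ℝ) ^ (t+1) := by positivity
    have hB : (0:ℝ) ≤ (Real.log (Real.log n)) ^ (t+1) :=
      pow_nonneg (Real.log_nonneg hln) _
    have : (34:ℝ) ≤ 10^8 := by norm_num
    gcongr
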